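/- arXiv:2604.21329 — 2 statements merged into one kernel-verified Lean document; each statement's English description precedes it below -/
import Mathlib

section
/- Let M be the mn × mn block companion matrix with m×m block structure: M has identity blocks I_n on the first superdiagonal of blocks, bottom block row (−γ₀L, −γ₁L, …, −γ_{m−1}L), and zeros elsewhere. Then det(λ I_{mn} − M) = Π_{i=1}^{n} (λ^m − Σ_{k=0}^{m−1} γ_k μ_i λ^k), where μ₁,…,μ_n are the eigenvalues of −L (counted with multiplicity). -/
open Matrix Polynomial Finset

/-- Block companion matrix of the `m`-th order consensus dynamics: identity blocks on the
first block superdiagonal and bottom block row `(-γ₀ L, …, -γ_{m-1} L)`. -/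
def consensusMatrix (m n : ℕ) (γ : ℕ → ℂ) (L : Matrix (Fin n) (Fin n) ℂ) :
    Matrix (Fin m × Fin n) (Fin m × Fin n) ℂ :=
  fun p q =>
    if p.1.val + 1 = q.1.val then (if p.2 = q.2 then 1 else 0)
    else if p.1.val = m - 1 then -γ q.1.val * L p.2 q.2
    else 0

lemma detA_eval {n : ℕ} (L : Matrix (Fin n) (Fin n) ℂ) (μ : Fin n → ℂ)
    (hμ : (-L).charpoly = ∏ i, (X - C (μ i))) (z : ℂ) :
    (z • (1 : Matrix (Fin n) (Fin n) ℂ) + L).det = ∏ i, (z - μ i) := by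
  have h1 := congrArg (Polynomial.eval z) hμ
  rw [Matrix.charpoly] at h1
  have h2 : Polynomial.eval z ((charmatrix (-L)).det)
      = ((charmatrix (-L)).map (Polynomial.evalRingHom z)).det :=
    RingHom.map_det (Polynomial.evalRingHom z) _
  have h3 : ((charmatrix (-L)).map (Polynomial.evalRingHom z))
      = z • (1 : Matrix (Fin n) (Fin n) ℂ) + L := by
    ext i j
    by_cases h : i = j <;>
      simp [charmatrix_apply, Matrix.one_apply, h, Matrix.diagonal_apply]
  rw [h2, h3] at h1
  rw [h1, Polynomial.eval_prod]
  simp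

lemma detP {n : ℕ} (L : Matrix (Fin n) (Fin n) ℂ) (μ : Fin n → ℂ)
    (hμ : (-L).charpoly = ∏ i, (X - C (μ i))) (x c : ℂ) :
    (x • (1 : Matrix (Fin n) (Fin n) ℂ) + c • L).det = ∏ i, (x - c * μ i) := by
  by_cases hc : c = 0
  · subst hc
    simp [Matrix.det_smul]
  · have h : x • (1 : Matrix (Fin n) (Fin n) ℂ) + c • L
        = c • ((x / c) • (1 : Matrix (Fin n) (Fin n) ℂ) + L) := by
      rw [smul_add, smul_smul, mul_div_cancel₀ _ hc]
    have hcn : c ^ n = ∏ _i : Fin n, c := by simp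
    rw [h, Matrix.det_smul, detA_eval L μ hμ, Fintype.card_fin, hcn,
      ← Finset.prod_mul_distrib]
    refine Finset.prod_congr rfl fun i _ => ?_
    field_simp

lemma det_blockLower {m n : ℕ} (M : Matrix (Fin m × Fin n) (Fin m × Fin n) ℂ)
    (h : ∀ p q : Fin m × Fin n, p.1 < q.1 → M p q = 0)
    (D : Fin m → Matrix (Fin n) (Fin n) ℂ)
    (hD : ∀ (k : Fin m) (a b : Fin n), M (k, a) (k, b) = D k a b) :
    M.det = ∏ k, (D k).det := by
  rw [← Matrix.det_transpose]
  have ht : BlockTriangular Mᵀ Prod.fst := fun p q hlt => h q p hlt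
  rw [ht.det_fintype]
  refine Finset.prod_congr rfl fun k _ => ?_
  let e : Fin n ≃ {p : Fin m × Fin n // p.1 = k} :=
    ⟨fun a => ⟨(k, a), rfl⟩, fun p => p.1.2,
     fun a => rfl, fun p => Subtype.ext (by
        obtain ⟨⟨k', a⟩, hk⟩ := p
        cases hk
        rfl)⟩
  rw [← Matrix.det_submatrix_equiv_self e (Mᵀ.toSquareBlock Prod.fst k), ← Matrix.det_transpose]
  congr 1
  ext a b
  exact hD k a b

theorem stmt_8 (m n : ℕ) (hm : 1 ≤ m) (γ : ℕ → ℂ) (L : Matrix (Fin n) (Fin n) ℂ)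
    (μ : Fin n → ℂ)
    (hμ : (-L).charpoly = ∏ i, (Polynomial.X - Polynomial.C (μ i))) (lam : ℂ) :
    (lam • (1 : Matrix (Fin m × Fin n) (Fin m × Fin n) ℂ) - consensusMatrix m n γ L).det =
      ∏ i, (lam ^ m - ∑ k ∈ Finset.range m, γ k * μ i * lam ^ k) := by
  obtain ⟨m', rfl⟩ : ∃ k, m = k + 1 := ⟨m - 1, (Nat.succ_pred_eq_of_pos hm).symm⟩
  set c : ℂ := ∑ k ∈ Finset.range (m' + 1), γ k * lam ^ k with hc
  set P : Matrix (Fin n) (Fin n) ℂ := lam ^ (m' + 1) • 1 + c • L with hP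
  set A : Matrix (Fin (m' + 1) × Fin n) (Fin (m' + 1) × Fin n) ℂ :=
    lam • 1 - consensusMatrix (m' + 1) n γ L with hA
  set V : Matrix (Fin (m' + 1) × Fin n) (Fin (m' + 1) × Fin n) ℂ :=
    (fun p q => if q.1 = 0 then lam ^ (p.1 : ℕ) * (if p.2 = q.2 then 1 else 0)
      else if p = q then 1 else 0) with hV
  -- entries of A
  have hAe : ∀ (i : Fin (m' + 1)) (a : Fin n) (j : Fin (m' + 1)) (b : Fin n),
      A (i, a) (j, b) = (if i = j ∧ a = b then lam else 0)
        - ((if (i : ℕ) + 1 = (j : ℕ) then (if a = b then 1 else 0) else 0)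
          + (if ¬((i : ℕ) + 1 = (j : ℕ)) ∧ (i : ℕ) = m' then -γ (j : ℕ) * L a b else 0)) := by
    intro i a j b
    rw [hA]
    simp only [Matrix.sub_apply, Matrix.smul_apply, Matrix.one_apply, consensusMatrix,
      Prod.mk.injEq, Nat.add_sub_cancel, smul_eq_mul]
    have h3 : ¬(m' + 1 = (j : ℕ)) := by have := j.isLt; omega
    by_cases h1 : (i : ℕ) + 1 = (j : ℕ) <;> by_cases h2 : (i : ℕ) = m' <;>
      simp [h1, h2, h3, mul_ite]
  -- entries of A * V
  have key : ∀ (i : Fin (m' + 1)) (a : Fin n) (k : Fin (m' + 1)) (b : Fin n),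
      (A * V) (i, a) (k, b)
        = if k = 0 then (if (i : ℕ) = m' then P a b else 0) else A (i, a) (k, b) := by
    intro i a k b
    by_cases hk : k = 0
    · subst hk
      rw [Matrix.mul_apply, Fintype.sum_prod_type, if_pos rfl]
      have hVe : ∀ (j : Fin (m' + 1)) (c' : Fin n),
          V (j, c') ((0 : Fin (m' + 1)), b) = lam ^ (j : ℕ) * (if c' = b then 1 else 0) := by
        intro j c'
        simp [hV]
      simp only [hVe, mul_ite, mul_one, mul_zero, ← mul_assoc]
      have hsum : ∀ j : Fin (m' + 1),
          (∑ c' : Fin n, if c' = b then A (i, a) (j, c') * lam ^ (j : ℕ) else 0)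
          = A (i, a) (j, b) * lam ^ (j : ℕ) := by
        intro j
        rw [Finset.sum_ite_eq' Finset.univ b (fun c' => A (i, a) (j, c') * lam ^ (j : ℕ))]
        simp
      rw [Finset.sum_congr rfl fun j _ => hsum j]
      by_cases hi : (i : ℕ) = m'
      · rw [if_pos hi]
        have hAe' : ∀ j : Fin (m' + 1), A (i, a) (j, b)
            = (if i = j ∧ a = b then lam else 0) + γ (j : ℕ) * L a b := by
          intro j
          rw [hAe]
          have h3 : ¬(m' + 1 = (j : ℕ)) := by have := j.isLt; omega
          have h1 : ¬((i : ℕ) + 1 = (j : ℕ)) := by omega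
          simp [h1, hi, h3]
        simp only [hAe', add_mul]
        rw [Finset.sum_add_distrib]
        have e1 : (∑ j : Fin (m' + 1), (if i = j ∧ a = b then lam else 0) * lam ^ (j : ℕ))
            = if a = b then lam ^ (m' + 1) else 0 := by
          rw [Finset.sum_congr rfl (fun j _ => by
            rw [ite_mul, zero_mul] : ∀ j ∈ Finset.univ, _ = if i = j ∧ a = b then lam * lam ^ (j : ℕ) else 0)]
          by_cases hab : a = b
          · simp only [hab, and_true]
            rw [Finset.sum_ite_eq Finset.univ i (fun j => lam * lam ^ (j : ℕ))]
            simp [hi, ← pow_succ']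
          · simp [hab]
        have e2 : (∑ j : Fin (m' + 1), γ (j : ℕ) * L a b * lam ^ (j : ℕ)) = c * L a b := by
          rw [hc, Finset.sum_range fun k => γ k * lam ^ k, Finset.sum_mul]
          exact Finset.sum_congr rfl fun j _ => by ring
        rw [e1, e2, hP]
        simp only [Matrix.add_apply, Matrix.smul_apply, Matrix.one_apply, smul_eq_mul]
        by_cases hab : a = b <;> simp [hab]
      · rw [if_neg hi]
        have him : (i : ℕ) < m' := by omega
        set j₀ : Fin (m' + 1) := ⟨(i : ℕ) + 1, by omega⟩ with hj₀
        have hAe' : ∀ j : Fin (m' + 1), A (i, a) (j, b)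
            = (if i = j ∧ a = b then lam else 0) - (if j = j₀ ∧ a = b then 1 else 0) := by
          intro j
          rw [hAe]
          have hcnd : ((i : ℕ) + 1 = (j : ℕ)) ↔ j = j₀ := by
            rw [Fin.ext_iff]
            simp only [hj₀]
            omega
          simp [hcnd, hi, ite_and]
        simp only [hAe', sub_mul]
        rw [Finset.sum_sub_distrib]
        by_cases hab : a = b
        · simp only [hab, and_true]
          rw [Finset.sum_congr rfl (fun j _ => by rw [ite_mul, zero_mul] :
              ∀ j ∈ Finset.univ, (if i = j then lam else 0) * lam ^ (j : ℕ)
                = if i = j then lam * lam ^ (j : ℕ) else 0),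
            Finset.sum_congr rfl (fun j _ => by rw [ite_mul, zero_mul] :
              ∀ j ∈ Finset.univ, (if j = j₀ then (1:ℂ) else 0) * lam ^ (j : ℕ)
                = if j = j₀ then 1 * lam ^ (j : ℕ) else 0)]
          rw [Finset.sum_ite_eq Finset.univ i (fun j => lam * lam ^ (j : ℕ)),
            Finset.sum_ite_eq' Finset.univ j₀ (fun j => 1 * lam ^ (j : ℕ))]
          simp [hj₀, ← pow_succ']
        · simp [hab]
    · rw [Matrix.mul_apply, if_neg hk]
      have hVe : ∀ r : Fin (m' + 1) × Fin n,
          V r (k, b) = if r = (k, b) then 1 else 0 := by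
        intro r
        rw [hV]
        simp only
        rw [if_neg hk]
      simp only [hVe, mul_ite, mul_one, mul_zero]
      rw [Finset.sum_ite_eq' Finset.univ ((k, b) : Fin (m' + 1) × Fin n) (fun r => A (i, a) r)]
      simp
  -- determinant of the shear V is 1
  have hVlow : ∀ p q : Fin (m' + 1) × Fin n, p.1 < q.1 → V p q = 0 := by
    intro p q hlt
    have hq0 : ¬(q.1 = 0) := by
      intro h
      rw [h] at hlt
      exact Fin.not_lt_zero _ hlt
    have hpq : ¬(p = q) := by
      intro h
      rw [h] at hlt
      exact lt_irrefl _ hlt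
    simp [hV, hq0, hpq]
  have hVdiag : ∀ (k : Fin (m' + 1)) (a b : Fin n),
      V (k, a) (k, b) = (1 : Matrix (Fin n) (Fin n) ℂ) a b := by
    intro k a b
    by_cases hk : k = 0
    · subst hk
      simp [hV, Matrix.one_apply]
    · simp [hV, hk, Prod.ext_iff, Matrix.one_apply]
  have hdetV : V.det = 1 := by
    rw [det_blockLower V hVlow (fun _ => 1) hVdiag]
    simp
  -- the block-cyclic column permutation
  set e : Equiv.Perm (Fin (m' + 1) × Fin n) :=
    Equiv.prodCongrLeft (fun _ : Fin n => finRotate (m' + 1)) with he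
  have heapp : ∀ p : Fin (m' + 1) × Fin n, e p = (p.1 + 1, p.2) := by
    intro p
    obtain ⟨i, a⟩ := p
    rw [he, Equiv.prodCongrLeft_apply, finRotate_succ_apply]
  -- the permuted matrix is block lower triangular
  have hNlow : ∀ p q : Fin (m' + 1) × Fin n, p.1 < q.1 →
      ((A * V).submatrix id ⇑e) p q = 0 := by
    intro p q hlt
    obtain ⟨i, a⟩ := p
    obtain ⟨k, b⟩ := q
    have hik : (i : ℕ) < (k : ℕ) := hlt
    simp only [Matrix.submatrix_apply, id, heapp]
    rw [key]
    by_cases hk : k = Fin.last m'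
    · have h0 : k + 1 = 0 := by rw [hk]; exact Fin.last_add_one m'
      rw [if_pos h0]
      have hkl : (k : ℕ) = m' := by rw [hk]; simp
      have hi3 : ¬((i : ℕ) = m') := by omega
      rw [if_neg hi3]
    · have hkm : (k : ℕ) ≠ m' := by
        intro h
        exact hk (Fin.ext (by simp [h]))
      have hkv : ((k + 1 : Fin (m' + 1)) : ℕ) = (k : ℕ) + 1 := by
        rw [Fin.val_add_one]
        simp [hk]
      have h0 : ¬(k + 1 = 0) := by
        intro h
        have := congrArg Fin.val h
        rw [hkv] at this
        simp at this
      rw [if_neg h0, hAe]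
      have hc1 : ¬(i = k + 1 ∧ a = b) := by
        rintro ⟨h, -⟩
        have := congrArg Fin.val h
        rw [hkv] at this
        omega
      have hc2 : ¬((i : ℕ) + 1 = ((k + 1 : Fin (m' + 1)) : ℕ)) := by
        rw [hkv]
        omega
      have hc3 : ¬((i : ℕ) = m') := by
        have := k.isLt
        omega
      simp [hc1, hc2, hc3]
  -- the diagonal blocks of the permuted matrix
  have hNdiag : ∀ (k : Fin (m' + 1)) (a b : Fin n),
      ((A * V).submatrix id ⇑e) (k, a) (k, b)
        = ((if k = Fin.last m' then P else -1) : Matrix (Fin n) (Fin n) ℂ) a b := by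
    intro k a b
    simp only [Matrix.submatrix_apply, id, heapp]
    rw [key]
    by_cases hk : k = Fin.last m'
    · have h0 : k + 1 = 0 := by rw [hk]; exact Fin.last_add_one m'
      have hkl : (k : ℕ) = m' := by rw [hk]; simp
      rw [if_pos h0, if_pos hkl, if_pos hk]
    · have hkm : (k : ℕ) ≠ m' := by
        intro h
        exact hk (Fin.ext (by simp [h]))
      have hkv : ((k + 1 : Fin (m' + 1)) : ℕ) = (k : ℕ) + 1 := by
        rw [Fin.val_add_one]
        simp [hk]
      have h0 : ¬(k + 1 = 0) := by
        intro h
        have := congrArg Fin.val h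
        rw [hkv] at this
        simp at this
      rw [if_neg h0, if_neg hk, hAe]
      have hc1 : ¬(k = k + 1 ∧ a = b) := by
        rintro ⟨h, -⟩
        have := congrArg Fin.val h
        rw [hkv] at this
        omega
      have hc2 : (k : ℕ) + 1 = ((k + 1 : Fin (m' + 1)) : ℕ) := hkv.symm
      simp only [hc1, hc2, hkm, Matrix.neg_apply, Matrix.one_apply, if_false, ite_false,
        and_false, false_and, if_neg hc1]
      have hkl := k.isLt
      simp [Fin.ext_iff, hkv]
  -- determinant of the permuted matrix
  have hdetN' : ((A * V).submatrix id ⇑e).det = (-1 : ℂ) ^ (n * m') * P.det := by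
    rw [det_blockLower _ hNlow _ hNdiag,
      Finset.prod_eq_mul_prod_sdiff_singleton_of_mem (Finset.mem_univ (Fin.last m'))
        (fun k => ((if k = Fin.last m' then P else -1) : Matrix (Fin n) (Fin n) ℂ).det),
      if_pos rfl]
    have hrest : ∀ k ∈ Finset.univ \ {Fin.last m'},
        ((if k = Fin.last m' then P else -1) : Matrix (Fin n) (Fin n) ℂ).det = (-1 : ℂ) ^ n := by
      intro k hk
      rw [Finset.mem_sdiff, Finset.mem_singleton] at hk
      rw [if_neg hk.2]
      simp [Matrix.det_neg]
    rw [Finset.prod_congr rfl hrest, Finset.prod_const]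
    have hcard : (Finset.univ \ ({Fin.last m'} : Finset (Fin (m' + 1)))).card = m' := by
      rw [Finset.card_sdiff_of_subset (by simp)]
      simp
    rw [hcard, ← pow_mul, mul_comm]
  -- sign of the permutation
  have hsign : Equiv.Perm.sign e = (-1 : ℤˣ) ^ (n * m') := by
    rw [he, Equiv.Perm.sign_prodCongrLeft]
    simp only [sign_finRotate]
    rw [Finset.prod_const, Finset.card_univ, Fintype.card_fin, ← pow_mul, mul_comm]
    rw [Nat.add_sub_cancel]
  have hdetAV : (A * V).det = P.det := by
    have h := Matrix.det_permute' e (A * V)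
    rw [hdetN', hsign] at h
    have hcast : (((-1 : ℤˣ) ^ (n * m') : ℤˣ) : ℂ) = (-1 : ℂ) ^ (n * m') := by
      push_cast
      rfl
    rw [hcast] at h
    exact mul_left_cancel₀ (pow_ne_zero _ (by norm_num : (-1 : ℂ) ≠ 0)) h.symm
  have hdetA : A.det = P.det := by
    calc A.det = A.det * V.det := by rw [hdetV, mul_one]
    _ = (A * V).det := (Matrix.det_mul A V).symm
    _ = P.det := hdetAV
  rw [hdetA, hP, detP L μ hμ]
  refine Finset.prod_congr rfl fun i _ => ?_
  congr 1
  rw [hc, Finset.sum_mul]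
  exact Finset.sum_congr rfl fun k _ => by ring
end

section
/- Let x₄ + p x² + q ≥ 0 be required for all real x, with q ≥ 0. This holds if and only if p ≥ −2√q. Consequently, the second-order protocol satisfies sup_ω |Φ₂(jω)| ≤ 1 if and only if a²r²γ₁² − 2arγ₀ − a²γ₁² ≥ −2aγ₀√(r² − 1). -/
theorem stmt_14 (a γ₀ γ₁ r : ℝ) (ha : 0 < a) (h0 : 0 < γ₀) (h1 : 0 < γ₁) (hr : 1 ≤ r)
    (hden : ∀ ω : ℝ, 0 < (a * r * γ₀ - ω ^ 2) ^ 2 + (a * r * γ₁ * ω) ^ 2) :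
    (∀ p q : ℝ, 0 ≤ q →
        ((∀ x : ℝ, x ^ 4 + p * x ^ 2 + q ≥ 0) ↔ p ≥ -2 * Real.sqrt q)) ∧
    ((∀ ω : ℝ,
        ‖
          (a : ℂ) * ((γ₁ : ℂ) * (Complex.I * ω) + γ₀) /
            ((Complex.I * ω) ^ 2 + (a : ℂ) * (r : ℂ) * ((γ₁ : ℂ) * (Complex.I * ω) + γ₀))‖ ≤ 1) ↔
      a ^ 2 * r ^ 2 * γ₁ ^ 2 - 2 * a * r * γ₀ - a ^ 2 * γ₁ ^ 2 ≥
        -2 * a * γ₀ * Real.sqrt (r ^ 2 - 1)) := by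
  have part1 : ∀ p q : ℝ, 0 ≤ q →
      ((∀ x : ℝ, x ^ 4 + p * x ^ 2 + q ≥ 0) ↔ p ≥ -2 * Real.sqrt q) := by
    intro p q hq
    constructor
    · intro h
      by_contra hp
      push_neg at hp
      set t := -p / 2 with ht
      have hsq : Real.sqrt q < t := by
        have := Real.sqrt_nonneg q
        linarith
      have ht0 : 0 ≤ t := le_trans (Real.sqrt_nonneg q) hsq.le
      have h2 : Real.sqrt t ^ 2 = t := Real.sq_sqrt ht0
      have h4 : Real.sqrt t ^ 4 = t ^ 2 := by
        rw [show (4 : ℕ) = 2 * 2 from rfl, pow_mul, h2]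
      have hq' : q < t ^ 2 := by
        nlinarith [Real.sq_sqrt hq, Real.sqrt_nonneg q]
      have := h (Real.sqrt t)
      rw [h4, h2] at this
      nlinarith
    · intro hp x
      nlinarith [Real.sq_sqrt hq, Real.sqrt_nonneg q,
        sq_nonneg (x ^ 2 - Real.sqrt q),
        mul_nonneg (by linarith : (0:ℝ) ≤ p + 2 * Real.sqrt q) (sq_nonneg x)]
  refine ⟨part1, ?_⟩
  set P : ℝ := a ^ 2 * r ^ 2 * γ₁ ^ 2 - 2 * a * r * γ₀ - a ^ 2 * γ₁ ^ 2 with hP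
  set Q : ℝ := a ^ 2 * γ₀ ^ 2 * (r ^ 2 - 1) with hQ
  have hr2 : (0:ℝ) ≤ r ^ 2 - 1 := by nlinarith
  have hQ0 : 0 ≤ Q := by positivity
  have hsqQ : Real.sqrt Q = a * γ₀ * Real.sqrt (r ^ 2 - 1) := by
    rw [hQ, show a ^ 2 * γ₀ ^ 2 * (r ^ 2 - 1) = (a * γ₀) ^ 2 * (r ^ 2 - 1) by ring,
      Real.sqrt_mul (sq_nonneg _), Real.sqrt_sq (by positivity)]
  have key : ∀ ω : ℝ,
      ‖(a : ℂ) * ((γ₁ : ℂ) * (Complex.I * ω) + γ₀) /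
            ((Complex.I * ω) ^ 2 + (a : ℂ) * (r : ℂ) * ((γ₁ : ℂ) * (Complex.I * ω) + γ₀))‖ ≤ 1 ↔
      ω ^ 4 + P * ω ^ 2 + Q ≥ 0 := by
    intro ω
    have hd := hden ω
    set num : ℂ := (a : ℂ) * ((γ₁ : ℂ) * (Complex.I * ω) + γ₀) with hnum
    set den : ℂ := (Complex.I * ω) ^ 2 + (a : ℂ) * (r : ℂ) * ((γ₁ : ℂ) * (Complex.I * ω) + γ₀)
      with hdenc
    have hnum_eq : num = ((a * γ₀ : ℝ) : ℂ) + ((a * γ₁ * ω : ℝ) : ℂ) * Complex.I := by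
      rw [hnum]; push_cast; ring
    have hden_eq : den = ((a * r * γ₀ - ω ^ 2 : ℝ) : ℂ) +
        ((a * r * γ₁ * ω : ℝ) : ℂ) * Complex.I := by
      rw [hdenc, show (Complex.I * (ω:ℂ)) ^ 2 = Complex.I ^ 2 * (ω:ℂ) ^ 2 from mul_pow _ _ _,
        Complex.I_sq]
      push_cast; ring
    have hnsn : Complex.normSq num = (a * γ₀) ^ 2 + (a * γ₁ * ω) ^ 2 := by
      rw [hnum_eq, Complex.normSq_add_mul_I]
    have hnsd : Complex.normSq den = (a * r * γ₀ - ω ^ 2) ^ 2 + (a * r * γ₁ * ω) ^ 2 := by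
      rw [hden_eq, Complex.normSq_add_mul_I]
    have hden_ne : den ≠ 0 := by
      rw [← Complex.normSq_pos, hnsd]; exact hd
    have habs_pos : 0 < ‖den‖ := norm_pos_iff.mpr hden_ne
    rw [norm_div, div_le_one habs_pos,
      ← pow_le_pow_iff_left₀ (norm_nonneg num) (norm_nonneg den) two_ne_zero,
      Complex.sq_norm, Complex.sq_norm, hnsn, hnsd]
    constructor
    · intro h; nlinarith
    · intro h; nlinarith
  rw [forall_congr' key, part1 P Q hQ0, hsqQ]
  constructor <;> intro h <;> linarith
end
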